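/- If an r×s array filled with symbols from [k], each symbol occurring at most once per row and at most once per column, can be extended to an n×n array in which symbol ℓ occurs exactly ρ_ℓ times (each symbol still at most once per row and column), then for every symbol ℓ, the number e_ℓ of occurrences of ℓ in the original r×s array satisfies e_ℓ ≥ r + s + ρ_ℓ − 2n. -/

import Mathlib

open Finset

/-- `L` is a (partial) latin array: each symbol occurs at most once in each
row and at most once in each column. -/
def latinArr {r s k : ℕ} (L : Fin r → Fin s → Fin k) : Prop :=
  (∀ i, Function.Injective (L i)) ∧ (∀ j, Function.Injective (fun i => L i j))

/-- Number of occurrences of symbol `ℓ` in `L`. -/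
def symCount {r s k : ℕ} (L : Fin r → Fin s → Fin k) (ℓ : Fin k) : ℕ :=
  ((univ : Finset (Fin r × Fin s)).filter (fun p => L p.1 p.2 = ℓ)).card

/-- `μ_I(ℓ)`: number of rows in `I` in which symbol `ℓ` is missing. -/
def muRows {r s k : ℕ} (L : Fin r → Fin s → Fin k) (I : Finset (Fin r)) (ℓ : Fin k) : ℕ :=
  (I.filter (fun i => ∀ j, L i j ≠ ℓ)).card

/-- `μ_J(ℓ)`: number of columns in `J` in which symbol `ℓ` is missing. -/
def muCols {r s k : ℕ} (L : Fin r → Fin s → Fin k) (J : Finset (Fin s)) (ℓ : Fin k) : ℕ :=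
  (J.filter (fun j => ∀ i, L i j ≠ ℓ)).card

/-- `μ_K(i)` for a row `i`: number of symbols of `K` missing in row `i`. -/
def muSymRow {r s k : ℕ} (L : Fin r → Fin s → Fin k) (K : Finset (Fin k)) (i : Fin r) : ℕ :=
  (K.filter (fun ℓ => ∀ j, L i j ≠ ℓ)).card

/-- `μ_K(j)` for a column `j`: number of symbols of `K` missing in column `j`. -/
def muSymCol {r s k : ℕ} (L : Fin r → Fin s → Fin k) (K : Finset (Fin k)) (j : Fin s) : ℕ :=
  (K.filter (fun ℓ => ∀ i, L i j ≠ ℓ)).card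

/-- `S` is an `n × n` `ρ`-latin square. -/
def rhoLatinSquare {n k : ℕ} (ρ : Fin k → ℕ) (S : Fin n → Fin n → Fin k) : Prop :=
  latinArr S ∧ ∀ ℓ, symCount S ℓ = ρ ℓ

/-- `S` extends `L` on the top-left `r × s` corner. -/
def extends' {r s n k : ℕ} (hr : r ≤ n) (hs : s ≤ n)
    (L : Fin r → Fin s → Fin k) (S : Fin n → Fin n → Fin k) : Prop :=
  ∀ i j, S (Fin.castLE hr i) (Fin.castLE hs j) = L i j

/-- If an `r × s` latin rectangle extends to an `n × n` `ρ`-latin square, then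
`e_ℓ ≥ r + s + ρ_ℓ - 2n` for every symbol `ℓ`. -/
lemma cardFilterGe (n r : ℕ) (hrn : r ≤ n) :
    ((univ : Finset (Fin n)).filter (fun i => r ≤ i.val)).card = n - r := by
  have himg : (univ : Finset (Fin n)).filter (fun i => i.val < r)
      = (univ : Finset (Fin r)).image (Fin.castLE hrn) := by
    ext x
    simp only [mem_filter, mem_univ, true_and, mem_image]
    constructor
    · intro hx; exact ⟨⟨x.val, hx⟩, by ext; simp⟩
    · rintro ⟨y, rfl⟩; exact y.isLt
  have h1 : ((univ : Finset (Fin n)).filter (fun i => i.val < r)).card = r := by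
    rw [himg, Finset.card_image_of_injective _ (Fin.castLE_injective hrn)]
    simp
  have h2 := Finset.card_filter_add_card_filter_not
    (s := (univ : Finset (Fin n))) (p := fun i : Fin n => r ≤ i.val)
  simp only [not_le, card_univ, Fintype.card_fin, h1] at h2
  omega

theorem stmt0 (n k r s : ℕ) (hr : 0 < r) (hs : 0 < s) (hrn : r ≤ n) (hsn : s ≤ n)
    (hnk : n ≤ k) (ρ : Fin k → ℕ) (hρ1 : ∀ ℓ, 1 ≤ ρ ℓ) (hρn : ∀ ℓ, ρ ℓ ≤ n)
    (hsum : ∑ ℓ, ρ ℓ = n ^ 2)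
    (L : Fin r → Fin s → Fin k) (hL : latinArr L)
    (S : Fin n → Fin n → Fin k) (hS : rhoLatinSquare ρ S)
    (hext : extends' hrn hsn L S) :
    ∀ ℓ, r + s + ρ ℓ ≤ symCount L ℓ + 2 * n := by
  intro ℓ
  obtain ⟨⟨hSrow, hScol⟩, hcount⟩ := hS
  set T : Finset (Fin n × Fin n) :=
    (univ : Finset (Fin n × Fin n)).filter (fun p => S p.1 p.2 = ℓ) with hTdef
  have hT : T.card = ρ ℓ := hcount ℓ
  set A := T.filter (fun p => p.1.val < r ∧ p.2.val < s) with hA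
  set B := T.filter (fun p => r ≤ p.1.val) with hB
  set C := T.filter (fun p => s ≤ p.2.val) with hC
  have hsub : T ⊆ A ∪ B ∪ C := by
    intro p hp
    simp only [mem_union, hA, hB, hC, mem_filter]
    by_cases h1 : r ≤ p.1.val
    · exact Or.inl (Or.inr ⟨hp, h1⟩)
    · by_cases h2 : s ≤ p.2.val
      · exact Or.inr ⟨hp, h2⟩
      · exact Or.inl (Or.inl ⟨hp, by omega, by omega⟩)
  have hcard : T.card ≤ A.card + B.card + C.card := by
    calc T.card ≤ (A ∪ B ∪ C).card := Finset.card_le_card hsub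
    _ ≤ (A ∪ B).card + C.card := Finset.card_union_le _ _
    _ ≤ A.card + B.card + C.card := by
        have := Finset.card_union_le A B; omega
  -- card A = symCount L ℓ
  have hAimg : A = ((univ : Finset (Fin r × Fin s)).filter (fun p => L p.1 p.2 = ℓ)).image
      (fun p => (Fin.castLE hrn p.1, Fin.castLE hsn p.2)) := by
    ext p
    simp only [hA, hTdef, mem_filter, mem_univ, true_and, mem_image]
    constructor
    · rintro ⟨hpS, h1, h2⟩
      refine ⟨(⟨p.1.val, h1⟩, ⟨p.2.val, h2⟩), ?_, ?_⟩
      · rw [← hext]; simpa using hpS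
      · ext <;> simp
    · rintro ⟨q, hq, rfl⟩
      refine ⟨by rw [hext]; exact hq, q.1.isLt, q.2.isLt⟩
  have hAcard : A.card = symCount L ℓ := by
    rw [hAimg, Finset.card_image_of_injective, symCount]
    intro p q hpq
    simp only [Prod.mk.injEq] at hpq
    have h1 := Fin.castLE_injective hrn hpq.1
    have h2 := Fin.castLE_injective hsn hpq.2
    exact Prod.ext h1 h2
  have hBcard : B.card ≤ n - r := by
    rw [← cardFilterGe n r hrn]
    apply Finset.card_le_card_of_injOn (fun p => p.1)
    · intro p hp
      simp only [hB, mem_coe, mem_filter] at hp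
      simp only [mem_coe, mem_filter, mem_univ, true_and]
      exact hp.2
    · intro p hp q hq hpq
      simp only [hB, hTdef, mem_coe, mem_filter, mem_univ, true_and] at hp hq
      have h0 : S p.1 p.2 = S q.1 q.2 := hp.1.trans hq.1.symm
      rw [show p.1 = q.1 from hpq] at h0
      exact Prod.ext hpq (hSrow q.1 h0)
  have hCcard : C.card ≤ n - s := by
    rw [← cardFilterGe n s hsn]
    apply Finset.card_le_card_of_injOn (fun p => p.2)
    · intro p hp
      simp only [hC, mem_coe, mem_filter] at hp
      simp only [mem_coe, mem_filter, mem_univ, true_and]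
      exact hp.2
    · intro p hp q hq hpq
      simp only [hC, hTdef, mem_coe, mem_filter, mem_univ, true_and] at hp hq
      have h0 : S p.1 p.2 = S q.1 q.2 := hp.1.trans hq.1.symm
      rw [show p.2 = q.2 from hpq] at h0
      exact Prod.ext (hScol q.2 h0) hpq
  omega
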